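/- If a machine M is TA-compliant with the architecture HL and π(p) depends on {H} actions at α, then M,π,α ⊨ ¬K_L p. -/

import Mathlib

structure Machine (S A D O : Type) where
  s0 : S
  step : S → A → S
  dom : A → D
  obs : D → S → O

namespace Machine

def run {S A D O : Type} (M : Machine S A D O) (α : List A) : S :=
  α.foldl M.step M.s0

end Machine
/-- Elements of a view: actions or (group) observations. -/
inductive VE (A O' : Type) where
  | act : A → VE A O'
  | obs : O' → VE A O'

open Classical in
/-- Absorptive concatenation: `σ ∘ x` is `σ` if `x` equals the last element of `σ`,
and `σ ++ [x]` otherwise. -/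
noncomputable def absorb {X : Type} (σ : List X) (x : X) : List X :=
  if σ.getLast? = some x then σ else σ ++ [x]

open Classical in
/-- View of a group `G`, computed on the reversed action sequence. -/
noncomputable def viewR {S A D O : Type} (M : Machine S A D O) (G : Set D) :
    List A → List (VE A (G → O))
  | [] => [VE.obs (fun u : G => M.obs u.1 M.s0)]
  | a :: ρ =>
    let o : VE A (G → O) := VE.obs (fun u : G => M.obs u.1 (M.run ((a :: ρ).reverse)))
    if M.dom a ∈ G then viewR M G ρ ++ [VE.act a, o] else absorb (viewR M G ρ) o

/-- The view of group `G` of the action sequence `α`. -/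
noncomputable def view {S A D O : Type} (M : Machine S A D O) (G : Set D) (α : List A) :
    List (VE A (G → O)) :=
  viewR M G α.reverse
/-- Values of the `ta` function: nested tuples of actions. -/
inductive TA (A : Type) where
  | eps : TA A
  | node : TA A → TA A → A → TA A

open Classical in
/-- `ta`, computed on the reversed action sequence. -/
noncomputable def taR {A D : Type} (P : D → D → Prop) (dm : A → D) :
    List A → D → TA A
  | [], _ => TA.eps
  | a :: ρ, u =>
    if P (dm a) u then TA.node (taR P dm ρ u) (taR P dm ρ (dm a)) a
    else taR P dm ρ u

/-- `ta P dm α u` : maximal information domain `u` is permitted to have after `α`. -/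
noncomputable def ta {A D : Type} (P : D → D → Prop) (dm : A → D) (α : List A) (u : D) :
    TA A :=
  taR P dm α.reverse u

/-- TA-compliance of a machine with the information-flow policy `P`. -/
def TACompliant {S A D O : Type} (M : Machine S A D O) (P : D → D → Prop) : Prop :=
  ∀ (u : D) (α α' : List A), ta P M.dom α u = ta P M.dom α' u →
    M.obs u (M.run α) = M.obs u (M.run α')
/-- Formulas of the epistemic logic (without distributed knowledge). -/
inductive Formula (PC D : Type) where
  | tru : Formula PC D
  | atom : PC → Formula PC D
  | neg : Formula PC D → Formula PC D
  | conj : Formula PC D → Formula PC D → Formula PC D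
  | know : Set D → Formula PC D → Formula PC D

/-- Satisfaction relation `M,π,α ⊨ φ`. -/
def sat {S A D O PC : Type} (M : Machine S A D O) (π : PC → Set (List A)) :
    List A → Formula PC D → Prop
  | _, .tru => True
  | α, .atom p => α ∈ π p
  | α, .neg φ => ¬ sat M π α φ
  | α, .conj φ ψ => sat M π α φ ∧ sat M π α ψ
  | α, .know G φ => ∀ α', view M G α' = view M G α → sat M π α' φ
open Classical in
/-- `restr dm G α` : subsequence of `α` of actions whose domain lies in `G`. -/
noncomputable def restr {A D : Type} (dm : A → D) (G : Set D) (α : List A) : List A :=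
  α.filter (fun a => decide (dm a ∈ G))

/-- Proposition `X` depends on `G` actions at `α`. -/
def MDependsOn {A D : Type} (dm : A → D) (G : Set D) (X : Set (List A)) (α : List A) :
    Prop :=
  ∃ β : List A, restr dm Gᶜ α = restr dm Gᶜ β ∧ (α ∈ X ↔ β ∉ X)

/-- The two domains of the architecture `HL`. -/
inductive HLDom where
  | H : HLDom
  | L : HLDom
deriving DecidableEq

/-- The information-flow policy of the architecture `HL`:
`{(L,L), (H,H), (L,H)}`. -/
def HLrel : HLDom → HLDom → Prop := fun u v =>
  (u = HLDom.L ∧ v = HLDom.L) ∨ (u = HLDom.H ∧ v = HLDom.H) ∨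
    (u = HLDom.L ∧ v = HLDom.H)


section Aux

variable {S A O : Type}

noncomputable def qL {A : Type} (dm : A → HLDom) : A → Bool :=
  fun a => decide (dm a = HLDom.L)

lemma taR_filter {A : Type} (dm : A → HLDom) (ρ : List A) :
    taR HLrel dm ρ HLDom.L = taR HLrel dm (ρ.filter (qL dm)) HLDom.L := by
  induction ρ with
  | nil => rfl
  | cons a ρ ih =>
    by_cases h : dm a = HLDom.L
    · simp [taR, qL, h, HLrel, ih]
    · simp [taR, qL, h, HLrel, ih]

lemma obsL_eq (M : Machine S A HLDom O) (hTA : TACompliant M HLrel)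
    (α β : List A) (h : α.filter (qL M.dom) = β.filter (qL M.dom)) :
    M.obs HLDom.L (M.run α) = M.obs HLDom.L (M.run β) := by
  apply hTA
  unfold ta
  rw [taR_filter, taR_filter M.dom β.reverse, List.filter_reverse,
    List.filter_reverse, h]

lemma viewR_getLast (M : Machine S A HLDom O) (ρ : List A) :
    (viewR M {HLDom.L} ρ).getLast? =
      some (VE.obs (fun u : ({HLDom.L} : Set HLDom) => M.obs u.1 (M.run ρ.reverse))) := by
  induction ρ with
  | nil => simp [viewR, Machine.run]
  | cons a ρ ih =>
    by_cases h : M.dom a ∈ ({HLDom.L} : Set HLDom)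
    · simp [viewR, h]
    · simp only [viewR, if_neg h, absorb]
      split
      · next heq => exact heq
      · simp

lemma viewR_filter (M : Machine S A HLDom O) (hTA : TACompliant M HLrel)
    (ρ : List A) :
    viewR M {HLDom.L} ρ = viewR M {HLDom.L} (ρ.filter (qL M.dom)) := by
  induction ρ with
  | nil => rfl
  | cons a ρ ih =>
    have hfid : (ρ.filter (qL M.dom)).filter (qL M.dom) = ρ.filter (qL M.dom) :=
      List.filter_eq_self.mpr (fun a ha => List.of_mem_filter ha)
    by_cases h : M.dom a = HLDom.L
    · have hmem : M.dom a ∈ ({HLDom.L} : Set HLDom) := h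
      rw [List.filter_cons_of_pos (by simp [qL, h])]
      simp only [viewR, if_pos hmem]
      have hobs : M.obs HLDom.L (M.run (a :: ρ).reverse)
          = M.obs HLDom.L (M.run (a :: ρ.filter (qL M.dom)).reverse) := by
        apply obsL_eq M hTA
        rw [List.filter_reverse, List.filter_reverse,
          List.filter_cons_of_pos (by simp [qL, h]),
          List.filter_cons_of_pos (by simp [qL, h]), hfid]
      have hfun : (fun u : ({HLDom.L} : Set HLDom) => M.obs u.1 (M.run (a :: ρ).reverse))
          = (fun u : ({HLDom.L} : Set HLDom) =>
              M.obs u.1 (M.run (a :: ρ.filter (qL M.dom)).reverse)) := by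
        funext u
        have hu : u.1 = HLDom.L := u.2
        rw [hu]
        exact hobs
      rw [ih, hfun]
    · have hnm : M.dom a ∉ ({HLDom.L} : Set HLDom) := h
      rw [List.filter_cons_of_neg (by simp [qL, h])]
      simp only [viewR, if_neg hnm]
      have hobs : (fun u : ({HLDom.L} : Set HLDom) => M.obs u.1 (M.run (a :: ρ).reverse))
          = (fun u : ({HLDom.L} : Set HLDom) => M.obs u.1 (M.run ρ.reverse)) := by
        funext u
        have hu : u.1 = HLDom.L := u.2
        rw [hu]
        apply obsL_eq M hTA
        rw [List.filter_reverse, List.filter_reverse,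
          List.filter_cons_of_neg (by simp [qL, h])]
      rw [hobs, absorb, if_pos (viewR_getLast M ρ), ih]

lemma view_eq (M : Machine S A HLDom O) (hTA : TACompliant M HLrel)
    (α β : List A) (h : α.filter (qL M.dom) = β.filter (qL M.dom)) :
    view M {HLDom.L} α = view M {HLDom.L} β := by
  unfold view
  rw [viewR_filter M hTA, viewR_filter M hTA β.reverse,
    List.filter_reverse, List.filter_reverse, h]

end Aux

/-- if `M` is TA-compliant with `HL` and `π(p)` depends on `{H}`
actions at `α`, then `M,π,α ⊨ ¬K_L p`. -/
theorem statement4 {S A O PC : Type} (M : Machine S A HLDom O)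
    (hTA : TACompliant M HLrel) (π : PC → Set (List A)) (p : PC) (α : List A)
    (hdep : MDependsOn M.dom {HLDom.H} (π p) α) :
    sat M π α (Formula.neg (Formula.know {HLDom.L} (Formula.atom p))) := by
  obtain ⟨β, hrestr, hiff⟩ := hdep
  have hfilter : α.filter (qL M.dom) = β.filter (qL M.dom) := by
    have hc : ∀ γ : List A, restr M.dom ({HLDom.H} : Set HLDom)ᶜ γ = γ.filter (qL M.dom) := by
      intro γ
      unfold restr
      apply List.filter_congr
      intro a _
      cases hh : M.dom a <;> simp [qL, hh]
    rw [← hc, ← hc, hrestr]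
  intro hK
  have hα : α ∈ π p := hK α rfl
  have hβ : β ∈ π p := hK β (view_eq M hTA β α hfilter.symm)
  exact hiff.mp hα hβ
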